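/- arXiv:2510.27686 — 3 statements merged into one kernel-verified Lean document; each statement's English description precedes it below -/
import Mathlib

section
/- Let F : ℝ^d → ℝ^d be C¹ with F(0) = 0, and suppose there exist constants C₁, C₄, r > 0 such that on the ball B(0, C₁ r) the Jacobian DF(x) is invertible and satisfies |DF(x)v| ≥ C₄ r |v| for all v. Then the image F(B(0, C₁ r)) contains the ball B(0, C₁ C₄ r²). -/
set_option maxHeartbeats 1000000


/-- Quantitative openness: if `F : ℝᵈ → ℝᵈ` is `C¹` with `F(0) = 0`, and on `B(0, C₁ r)`
the Jacobian `DF(x)` is invertible with `|DF(x)v| ≥ C₄ r |v|`, then the image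
`F(B(0, C₁ r))` contains the ball `B(0, C₁ C₄ r²)`. -/
theorem stmt5 (d : ℕ) (F : EuclideanSpace ℝ (Fin d) → EuclideanSpace ℝ (Fin d))
    (r C₁ C₄ : ℝ) (hr : 0 < r) (hC₁ : 0 < C₁) (hC₄ : 0 < C₄)
    (hF : ContDiff ℝ 1 F) (hF0 : F 0 = 0)
    (hinv : ∀ x ∈ Metric.ball (0 : EuclideanSpace ℝ (Fin d)) (C₁ * r),
      Function.Bijective (fderiv ℝ F x) ∧ ∀ v, C₄ * r * ‖v‖ ≤ ‖fderiv ℝ F x v‖) :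
    Metric.ball (0 : EuclideanSpace ℝ (Fin d)) (C₁ * C₄ * r ^ 2) ⊆
      F '' Metric.ball 0 (C₁ * r) := by
  intro y hy
  rw [Metric.mem_ball, dist_zero_right] at hy
  rcases eq_or_ne y 0 with rfl | hy0
  · exact ⟨0, Metric.mem_ball_self (by positivity), hF0⟩
  have hy0' : 0 < ‖y‖ := norm_pos_iff.2 hy0
  set c' : ℝ := (‖y‖ + C₁ * C₄ * r ^ 2) / (2 * C₁ * r) with hc'
  have hc'pos : 0 < c' := by positivity
  have hc'lt : c' < C₄ * r := by
    rw [hc', div_lt_iff₀ (by positivity)]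
    nlinarith
  set ρ : ℝ := ‖y‖ / c' with hρ
  have hρpos : 0 < ρ := by positivity
  have hρlt : ρ < C₁ * r := by
    rw [hρ, div_lt_iff₀ hc'pos]
    have : C₁ * r * c' = (‖y‖ + C₁ * C₄ * r ^ 2) / 2 := by
      rw [hc']; field_simp
    rw [this]; linarith
  set S : Set ℝ := {t : ℝ | t ∈ Set.Icc (0 : ℝ) 1 ∧
    ∃ x : EuclideanSpace ℝ (Fin d), ‖x‖ ≤ t * ρ ∧ F x = t • y} with hS
  have hS0 : (0 : ℝ) ∈ S := ⟨⟨le_rfl, zero_le_one⟩, 0, by simp, by simp [hF0]⟩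
  have hSne : S.Nonempty := ⟨0, hS0⟩
  have hSbdd : BddAbove S := ⟨1, fun t ht => ht.1.2⟩
  set T : ℝ := sSup S with hT
  -- T ∈ S by compactness
  obtain ⟨u, hu_mono, hu_tend, hu_mem⟩ := exists_seq_tendsto_sSup hSne hSbdd
  choose x hx_norm hx_F using fun n => (hu_mem n).2
  have hu_Icc : ∀ n, u n ∈ Set.Icc (0 : ℝ) 1 := fun n => (hu_mem n).1
  have hx_ball : ∀ n, x n ∈ Metric.closedBall (0 : EuclideanSpace ℝ (Fin d)) ρ := by
    intro n
    rw [Metric.mem_closedBall, dist_zero_right]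
    calc ‖x n‖ ≤ u n * ρ := hx_norm n
    _ ≤ 1 * ρ := by have := (hu_Icc n).2; nlinarith
    _ = ρ := one_mul ρ
  obtain ⟨x₀, _, φ, hφ_mono, hφ_tend⟩ :=
    (isCompact_closedBall (0 : EuclideanSpace ℝ (Fin d)) ρ).tendsto_subseq hx_ball
  have huφ_tend : Filter.Tendsto (fun n => u (φ n)) Filter.atTop (nhds T) :=
    hu_tend.comp hφ_mono.tendsto_atTop
  have hTIcc : T ∈ Set.Icc (0 : ℝ) 1 :=
    ⟨le_csSup hSbdd hS0, csSup_le hSne fun t ht => ht.1.2⟩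
  have hTS : T ∈ S := by
    refine ⟨hTIcc, x₀, ?_, ?_⟩
    · refine le_of_tendsto_of_tendsto (hφ_tend.norm) (huφ_tend.mul_const ρ) ?_
      exact Filter.Eventually.of_forall fun n => hx_norm (φ n)
    · have h1 : Filter.Tendsto (fun n => F (x (φ n))) Filter.atTop (nhds (F x₀)) :=
        (hF.continuous.tendsto x₀).comp hφ_tend
      have h2 : Filter.Tendsto (fun n => F (x (φ n))) Filter.atTop (nhds (T • y)) := by
        simp only [hx_F]
        exact huφ_tend.smul_const y
      exact tendsto_nhds_unique h1 h2
  -- T = 1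
  rcases eq_or_lt_of_le hTIcc.2 with hT1 | hT1
  · obtain ⟨_, x₀, hx₀n, hx₀F⟩ := hTS
    refine ⟨x₀, ?_, by rw [hx₀F, hT1, one_smul]⟩
    rw [Metric.mem_ball, dist_zero_right]
    calc ‖x₀‖ ≤ T * ρ := hx₀n
    _ ≤ 1 * ρ := by nlinarith [hTIcc.2]
    _ < C₁ * r := by rw [one_mul]; exact hρlt
  -- otherwise, push forward: contradiction
  exfalso
  obtain ⟨_, x₀, hx₀n, hx₀F⟩ := hTS
  have hx₀ρ : ‖x₀‖ ≤ ρ := le_trans hx₀n (by nlinarith [hTIcc.2])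
  have hx₀ball : x₀ ∈ Metric.ball (0 : EuclideanSpace ℝ (Fin d)) (C₁ * r) := by
    rw [Metric.mem_ball, dist_zero_right]; exact lt_of_le_of_lt hx₀ρ hρlt
  obtain ⟨hbij, hlow⟩ := hinv x₀ hx₀ball
  set A : EuclideanSpace ℝ (Fin d) →L[ℝ] EuclideanSpace ℝ (Fin d) := fderiv ℝ F x₀ with hA
  have hstrict : HasStrictFDerivAt F A x₀ :=
    (hF.contDiffAt).hasStrictFDerivAt one_ne_zero
  have hApos : (0 : ℝ) < C₄ * r := by positivity
  -- nonlinear right inverse with norm (C₄ r)⁻¹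
  set Ainv : ContinuousLinearMap.NonlinearRightInverse A :=
    { toFun := fun w => Function.invFun A w
      nnnorm := ⟨(C₄ * r)⁻¹, by positivity⟩
      bound' := fun w => by
        have h1 : A (Function.invFun A w) = w := Function.rightInverse_invFun hbij.2 w
        have h2 := hlow (Function.invFun A w)
        rw [h1] at h2
        show ‖Function.invFun A w‖ ≤ (C₄ * r)⁻¹ * ‖w‖
        rw [inv_mul_eq_div, le_div_iff₀ hApos]
        linarith
      right_inv' := fun w => Function.rightInverse_invFun hbij.2 w } with hAinv
  set cNN : NNReal := (C₄ * r - c').toNNReal with hcNN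
  have hcNNpos : (0 : NNReal) < cNN := Real.toNNReal_pos.2 (by linarith)
  obtain ⟨s, hs_nhds, hs_approx⟩ := hstrict.approximates_deriv_on_nhds (Or.inr hcNNpos)
  obtain ⟨ε₁, hε₁pos, hε₁sub⟩ := Metric.mem_nhds_iff.1 hs_nhds
  set ε : ℝ := min (ε₁ / 2) ((1 - T) * ‖y‖ / c') with hε
  have hεpos : 0 < ε := lt_min (by linarith) (div_pos (mul_pos (by linarith) hy0') hc'pos)
  have hεsub : Metric.closedBall x₀ ε ⊆ s := by
    refine subset_trans ?_ hε₁sub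
    intro z hz
    rw [Metric.mem_closedBall] at hz
    rw [Metric.mem_ball]
    calc dist z x₀ ≤ ε := hz
    _ ≤ ε₁ / 2 := min_le_left _ _
    _ < ε₁ := by linarith
  have hsurj := hs_approx.surjOn_closedBall_of_nonlinearRightInverse Ainv hεpos.le hεsub
  have hrad : (((Ainv.nnnorm : ℝ))⁻¹ - (cNN : ℝ)) * ε = c' * ε := by
    have h1 : (Ainv.nnnorm : ℝ) = (C₄ * r)⁻¹ := rfl
    have h2 : (cNN : ℝ) = C₄ * r - c' := Real.coe_toNNReal _ (by linarith)
    rw [h1, h2, inv_inv]; ring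
  rw [hrad] at hsurj
  have hquot : 0 < c' * ε / ‖y‖ := div_pos (mul_pos hc'pos hεpos) hy0'
  set t' : ℝ := T + c' * ε / ‖y‖ with ht'
  have ht'T : T < t' := by
    rw [ht']
    linarith
  have ht'1 : t' ≤ 1 := by
    have hεle : ε ≤ (1 - T) * ‖y‖ / c' := min_le_right _ _
    rw [ht']
    have : c' * ε / ‖y‖ ≤ 1 - T := by
      rw [div_le_iff₀ hy0']
      calc c' * ε ≤ c' * ((1 - T) * ‖y‖ / c') := by nlinarith
      _ = (1 - T) * ‖y‖ := by field_simp
    linarith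
  have hmem : t' • y ∈ Metric.closedBall (F x₀) (c' * ε) := by
    rw [Metric.mem_closedBall, hx₀F, dist_eq_norm, ← sub_smul, norm_smul,
      Real.norm_eq_abs, abs_of_pos (by linarith : (0:ℝ) < t' - T)]
    rw [ht']
    have : T + c' * ε / ‖y‖ - T = c' * ε / ‖y‖ := by ring
    rw [this, div_mul_eq_mul_div, mul_div_assoc, div_self hy0'.ne', mul_one]
  obtain ⟨x', hx'mem, hx'F⟩ := hsurj hmem
  rw [Metric.mem_closedBall, dist_eq_norm] at hx'mem
  have hx'norm : ‖x'‖ ≤ t' * ρ := by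
    have h1 : ‖x'‖ ≤ ‖x₀‖ + ε := by
      have := norm_le_norm_add_norm_sub' x' x₀
      linarith
    have key : c' * ε / ‖y‖ * ρ = ε := by
      rw [hρ]
      field_simp
    have h2 : t' * ρ = T * ρ + ε := by rw [ht', add_mul, key]
    rw [h2]; linarith
  have ht'S : t' ∈ S := ⟨⟨by rw [ht']; linarith [hTIcc.1], ht'1⟩, x', hx'norm, hx'F⟩
  exact absurd (le_csSup hSbdd ht'S) (not_le.2 ht'T)
end

section
/- Quantitative implicit function theorem: Let G : ℝ^{d₁+d₂} → ℝ^{d₂} be C², let (x₀, y₀) satisfy G(x₀, y₀) = 0, and suppose D ≥ max(1, ‖G‖_{C²}) and 0 < r ≤ |det D_y G(x₀, y₀)|. Then there is a constant C(d₁+d₂) depending only on the total dimension such that, with C₂ = C(d₁+d₂) D^{-2(d₁+d₂)+1}, there exists a C¹ function H : B(x₀, C₂ r²) → ℝ^{d₂} with G(x, H(x)) = 0 and |det D_y G(x, H(x))| ≥ r/2 for every x ∈ B(x₀, C₂ r²). -/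
open Finset Metric Topology Filter




private lemma aux_prod_sub_prod {ι : Type*} [DecidableEq ι] (s : Finset ι) (f g : ι → ℝ)
    {Dd δ : ℝ} (hD : 1 ≤ Dd) (hδ : 0 ≤ δ) :
    (∀ i ∈ s, |f i| ≤ Dd) → (∀ i ∈ s, |g i| ≤ Dd) → (∀ i ∈ s, |f i - g i| ≤ δ) →
    |(∏ i ∈ s, f i) - ∏ i ∈ s, g i| ≤ s.card * δ * Dd ^ s.card := by
  induction s using Finset.induction_on with
  | empty => simp
  | @insert a s ha ih =>
    intro hf hg hfg
    have hf' : ∀ i ∈ s, |f i| ≤ Dd := fun i hi => hf i (Finset.mem_insert_of_mem hi)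
    have hg' : ∀ i ∈ s, |g i| ≤ Dd := fun i hi => hg i (Finset.mem_insert_of_mem hi)
    have hfg' : ∀ i ∈ s, |f i - g i| ≤ δ := fun i hi => hfg i (Finset.mem_insert_of_mem hi)
    have IH := ih hf' hg' hfg'
    rw [Finset.prod_insert ha, Finset.prod_insert ha, Finset.card_insert_of_notMem ha]
    have hQ : |∏ i ∈ s, g i| ≤ Dd ^ s.card := by
      rw [Finset.abs_prod]
      calc ∏ i ∈ s, |g i| ≤ ∏ _i ∈ s, Dd :=
            Finset.prod_le_prod (fun i _ => abs_nonneg _) hg'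
        _ = Dd ^ s.card := Finset.prod_const Dd
    have key : |f a * ∏ i ∈ s, f i - g a * ∏ i ∈ s, g i| ≤
        |f a| * |(∏ i ∈ s, f i) - ∏ i ∈ s, g i| + |f a - g a| * |∏ i ∈ s, g i| := by
      have : f a * ∏ i ∈ s, f i - g a * ∏ i ∈ s, g i
          = f a * ((∏ i ∈ s, f i) - ∏ i ∈ s, g i) + (f a - g a) * ∏ i ∈ s, g i := by ring
      rw [this]
      exact (abs_add_le _ _).trans (by rw [abs_mul, abs_mul])
    have hfa : |f a| ≤ Dd := hf a (Finset.mem_insert_self a s)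
    have hfga : |f a - g a| ≤ δ := hfg a (Finset.mem_insert_self a s)
    have h1 : |f a| * |(∏ i ∈ s, f i) - ∏ i ∈ s, g i| ≤ Dd * (s.card * δ * Dd ^ s.card) := by
      apply mul_le_mul hfa IH (abs_nonneg _) (by linarith)
    have h2 : |f a - g a| * |∏ i ∈ s, g i| ≤ δ * Dd ^ s.card :=
      mul_le_mul hfga hQ (abs_nonneg _) hδ
    have hpow : (0:ℝ) ≤ Dd ^ s.card := by positivity
    have hpow1 : Dd ^ s.card ≤ Dd ^ (s.card + 1) := by
      calc Dd ^ s.card = 1 * Dd ^ s.card := (one_mul _).symm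
        _ ≤ Dd * Dd ^ s.card := by apply mul_le_mul_of_nonneg_right hD hpow
        _ = Dd ^ (s.card + 1) := by ring
    calc |f a * ∏ i ∈ s, f i - g a * ∏ i ∈ s, g i|
        ≤ Dd * (s.card * δ * Dd ^ s.card) + δ * Dd ^ s.card := key.trans (by linarith)
      _ = s.card * δ * Dd ^ (s.card + 1) + δ * Dd ^ s.card := by ring
      _ ≤ s.card * δ * Dd ^ (s.card + 1) + δ * Dd ^ (s.card + 1) := by
          have : (0:ℝ) ≤ δ := hδ
          nlinarith
      _ = (↑(s.card + 1)) * δ * Dd ^ (s.card + 1) := by push_cast; ring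

private lemma aux_det_bound {n : ℕ} (M : Matrix (Fin n) (Fin n) ℝ) (b : Fin n → ℝ)
    (hb : ∀ i, 0 ≤ b i) (h : ∀ i j, |M i j| ≤ b i) :
    |M.det| ≤ (Nat.factorial n : ℝ) * ∏ i, b i := by
  rw [Matrix.det_apply]
  refine (Finset.abs_sum_le_sum_abs _ _).trans ?_
  have hterm : ∀ σ : Equiv.Perm (Fin n), σ ∈ Finset.univ →
      |(Equiv.Perm.sign σ : ℤ) • ∏ i, M (σ i) i| ≤ ∏ i, b i := by
    intro σ _
    rw [zsmul_eq_mul, abs_mul]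
    have hs : |((Equiv.Perm.sign σ : ℤ) : ℝ)| = 1 := by
      rcases Int.units_eq_one_or (Equiv.Perm.sign σ) with h' | h' <;> simp [h']
    rw [hs, one_mul, Finset.abs_prod]
    calc ∏ i, |M (σ i) i| ≤ ∏ i, b (σ i) :=
          Finset.prod_le_prod (fun i _ => abs_nonneg _) (fun i _ => h (σ i) i)
      _ = ∏ i, b i := Equiv.prod_comp σ b
  refine (Finset.sum_le_card_nsmul _ _ _ hterm).trans ?_
  rw [nsmul_eq_mul]
  apply mul_le_mul_of_nonneg_right _ (Finset.prod_nonneg fun i _ => hb i)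
  norm_cast
  simp [Fintype.card_perm]



private lemma aux_det_sub {n : ℕ} (M N : Matrix (Fin n) (Fin n) ℝ) {Dd δ : ℝ}
    (hD : 1 ≤ Dd) (hδ : 0 ≤ δ) (hM : ∀ i j, |M i j| ≤ Dd) (hN : ∀ i j, |N i j| ≤ Dd)
    (hMN : ∀ i j, |M i j - N i j| ≤ δ) :
    |M.det - N.det| ≤ (Nat.factorial n : ℝ) * ((n : ℝ) * δ * Dd ^ n) := by
  rw [Matrix.det_apply, Matrix.det_apply, ← Finset.sum_sub_distrib]
  refine (Finset.abs_sum_le_sum_abs _ _).trans ?_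
  have hterm : ∀ σ : Equiv.Perm (Fin n), σ ∈ Finset.univ →
      |(Equiv.Perm.sign σ : ℤ) • ∏ i, M (σ i) i - (Equiv.Perm.sign σ : ℤ) • ∏ i, N (σ i) i|
        ≤ (n : ℝ) * δ * Dd ^ n := by
    intro σ _
    rw [zsmul_eq_mul, zsmul_eq_mul, ← mul_sub, abs_mul]
    have hs : |((Equiv.Perm.sign σ : ℤ) : ℝ)| = 1 := by
      rcases Int.units_eq_one_or (Equiv.Perm.sign σ) with h' | h' <;> simp [h']
    rw [hs, one_mul]
    have := aux_prod_sub_prod Finset.univ (fun i => M (σ i) i) (fun i => N (σ i) i) hD hδ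
      (fun i _ => hM (σ i) i) (fun i _ => hN (σ i) i) (fun i _ => hMN (σ i) i)
    simpa using this
  refine (Finset.sum_le_card_nsmul _ _ _ hterm).trans ?_
  rw [nsmul_eq_mul]
  apply mul_le_mul_of_nonneg_right _ (by positivity)
  norm_cast
  simp [Fintype.card_perm]

private lemma aux_coord_le_norm {n : ℕ} (v : EuclideanSpace ℝ (Fin n)) (i : Fin n) :
    |v i| ≤ ‖v‖ := by
  rw [EuclideanSpace.norm_eq]
  rw [show |v i| = Real.sqrt (‖v i‖ ^ 2) by rw [Real.sqrt_sq_eq_abs]; simp]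
  apply Real.sqrt_le_sqrt
  exact Finset.single_le_sum (f := fun j => ‖v j‖ ^ 2) (fun j _ => by positivity)
    (Finset.mem_univ i)

private lemma aux_norm_le_sum {n : ℕ} (v : EuclideanSpace ℝ (Fin n)) :
    ‖v‖ ≤ ∑ i, |v i| := by
  rw [EuclideanSpace.norm_eq]
  have h1 : ∑ i, ‖v i‖ ^ 2 ≤ (∑ i, ‖v i‖) ^ 2 :=
    Finset.sum_sq_le_sq_sum_of_nonneg (fun i _ => norm_nonneg _)
  calc Real.sqrt (∑ i, ‖v i‖ ^ 2) ≤ Real.sqrt ((∑ i, ‖v i‖) ^ 2) := Real.sqrt_le_sqrt h1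
    _ = ∑ i, ‖v i‖ := by
        rw [Real.sqrt_sq (Finset.sum_nonneg fun i _ => norm_nonneg _)]
    _ = ∑ i, |v i| := by simp [Real.norm_eq_abs]

private lemma aux_opNorm_le {n : ℕ}
    (T : EuclideanSpace ℝ (Fin n) →L[ℝ] EuclideanSpace ℝ (Fin n)) {m : ℝ} (hm : 0 ≤ m)
    (h : ∀ i j : Fin n, |T ((PiLp.basisFun 2 ℝ (Fin n)) j) i| ≤ m) :
    ‖T‖ ≤ (n : ℝ) ^ 2 * m := by
  set b := PiLp.basisFun 2 ℝ (Fin n)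
  refine ContinuousLinearMap.opNorm_le_bound _ (by positivity) fun v => ?_
  have hrepr : v = ∑ j, v j • b j := by
    have := b.sum_repr v
    simp only [b, PiLp.basisFun_repr] at this
    exact this.symm
  have hTv : T v = ∑ j, v j • T (b j) := by
    conv_lhs => rw [hrepr]
    rw [map_sum]
    simp
  rw [hTv]
  calc ‖∑ j, v j • T (b j)‖ ≤ ∑ j, ‖v j • T (b j)‖ := norm_sum_le _ _
    _ ≤ ∑ _j : Fin n, ((n : ℝ) * m) * ‖v‖ := by
        apply Finset.sum_le_sum
        intro j _
        rw [norm_smul, Real.norm_eq_abs]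
        have h1 : ‖T (b j)‖ ≤ (n : ℝ) * m := by
          refine (aux_norm_le_sum _).trans ?_
          calc ∑ i, |T (b j) i| ≤ ∑ _i : Fin n, m := Finset.sum_le_sum fun i _ => h i j
            _ = (n : ℝ) * m := by simp [mul_comm]
        have h2 : |v j| ≤ ‖v‖ := aux_coord_le_norm v j
        calc |v j| * ‖T (b j)‖ ≤ ‖v‖ * ((n:ℝ) * m) :=
              mul_le_mul h2 h1 (norm_nonneg _) (norm_nonneg _)
          _ = (n:ℝ) * m * ‖v‖ := by ring
    _ = (n:ℝ)^2 * m * ‖v‖ := by simp; ring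



private lemma aux_inv_entry {m : ℕ} (M : Matrix (Fin (m+1)) (Fin (m+1)) ℝ) {Dd r : ℝ}
    (hD : 1 ≤ Dd) (hr : 0 < r) (hdet : r ≤ |M.det|) (hM : ∀ i j, |M i j| ≤ Dd) :
    ∀ i j, |M⁻¹ i j| ≤ (Nat.factorial (m+1) : ℝ) * Dd ^ m / r := by
  intro i j
  have hdet0 : M.det ≠ 0 := fun h => by rw [h] at hdet; simp at hdet; linarith
  rw [Matrix.inv_def, Matrix.smul_apply, Ring.inverse_eq_inv', smul_eq_mul, abs_mul, abs_inv]
  have hadj : |M.adjugate i j| ≤ (Nat.factorial (m+1) : ℝ) * Dd ^ m := by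
    rw [Matrix.adjugate_apply]
    have := aux_det_bound (M.updateRow j (Pi.single i 1))
      (fun k => if k = j then 1 else Dd)
      (fun k => by split <;> [norm_num; linarith])
      ?_
    · refine this.trans (le_of_eq ?_)
      congr 1
      rw [← Finset.mul_prod_erase Finset.univ _ (Finset.mem_univ j)]
      rw [if_pos rfl, one_mul]
      calc ∏ k ∈ Finset.univ.erase j, (if k = j then 1 else Dd)
          = ∏ _k ∈ Finset.univ.erase j, Dd := by
            apply Finset.prod_congr rfl
            intro k hk
            rw [if_neg (Finset.ne_of_mem_erase hk)]
        _ = Dd ^ m := by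
            rw [Finset.prod_const, Finset.card_erase_of_mem (Finset.mem_univ j)]
            simp
    · intro k l
      rw [Matrix.updateRow_apply]
      by_cases hkj' : k = j
      · rw [if_pos hkj', if_pos hkj']
        rcases eq_or_ne l i with h' | h' <;> simp [Pi.single_apply, h']
      · rw [if_neg hkj', if_neg hkj']
        exact hM k l
  calc |M.det|⁻¹ * |M.adjugate i j| ≤ r⁻¹ * ((Nat.factorial (m+1) : ℝ) * Dd ^ m) := by
        apply mul_le_mul _ hadj (abs_nonneg _) (by positivity)
        exact inv_anti₀ hr hdet
    _ = (Nat.factorial (m+1) : ℝ) * Dd ^ m / r := by ring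



set_option maxHeartbeats 1600000 in
private lemma aux_main (d₁ m : ℕ)
    (G : EuclideanSpace ℝ (Fin d₁) × EuclideanSpace ℝ (Fin (m+1)) → EuclideanSpace ℝ (Fin (m+1)))
    (x₀ : EuclideanSpace ℝ (Fin d₁)) (y₀ : EuclideanSpace ℝ (Fin (m+1))) (D r ρ' : ℝ)
    (hG : ContDiff ℝ 2 G) (hG00 : G (x₀, y₀) = 0) (hD1 : 1 ≤ D)
    (hG1b : ∀ p, ‖fderiv ℝ G p‖ ≤ D)
    (hG2b : ∀ p, ‖fderiv ℝ (fderiv ℝ G) p‖ ≤ D)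
    (hr : 0 < r)
    (hrdet : r ≤ |(fderiv ℝ (fun y => G (x₀, y)) y₀).det|)
    (hρpos : 0 < ρ')
    (hρle : ρ' ≤ r^2 / (16 * (((m+1:ℕ):ℝ)^2 * ((Nat.factorial (m+1) : ℝ))^2)^2 * D^(2*m+3))) :
    ∃ H : EuclideanSpace ℝ (Fin d₁) → EuclideanSpace ℝ (Fin (m+1)),
      ContDiffOn ℝ 1 H (Metric.ball x₀ ρ') ∧
      ∀ x ∈ Metric.ball x₀ ρ',
        G (x, H x) = 0 ∧ r / 2 ≤ |(fderiv ℝ (fun y => G (x, y)) (H x)).det| := by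
  classical
  set nn : ℝ := ((m+1:ℕ):ℝ) with hnn_def
  set fac : ℝ := (Nat.factorial (m+1) : ℝ) with hfac_def
  have hnn1 : 1 ≤ nn := by rw [hnn_def]; exact_mod_cast Nat.one_le_iff_ne_zero.mpr (Nat.succ_ne_zero m)
  have hfac1 : 1 ≤ fac := by rw [hfac_def]; exact_mod_cast Nat.one_le_iff_ne_zero.mpr (Nat.factorial_ne_zero (m+1))
  have hD0 : (0:ℝ) < D := lt_of_lt_of_le one_pos hD1
  set c₁ : ℝ := nn^2 * fac^2 with hc₁_def
  have hnf : 1 ≤ nn * fac := by nlinarith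
  have hc₁1 : 1 ≤ c₁ := by rw [hc₁_def]; nlinarith [hnf, mul_le_mul hnf hnf zero_le_one (by linarith : (0:ℝ) ≤ nn * fac)]
  set ε : ℝ := r / (4 * c₁ * D^(m+2)) with hε_def
  set Kb : ℝ := nn^2 * fac * D^m / r with hKb_def
  have hDm : (0:ℝ) < D^m := pow_pos hD0 m
  have hDm1 : (1:ℝ) ≤ D^m := one_le_pow₀ hD1
  have hεpos : 0 < ε := by rw [hε_def]; positivity
  have hKbpos : 0 < Kb := by rw [hKb_def]; positivity
  -- differentiability facts
  have hGd : Differentiable ℝ G := hG.differentiable (by norm_num)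
  have hG' : ContDiff ℝ 1 (fderiv ℝ G) := hG.fderiv_right (le_refl _)
  have hG'd : Differentiable ℝ (fderiv ℝ G) := hG'.differentiable (by norm_num)
  have hLipG : ∀ p q, ‖G p - G q‖ ≤ D * ‖p - q‖ := fun p q =>
    convex_univ.norm_image_sub_le_of_norm_fderiv_le (fun x _ => hGd x)
      (fun x _ => hG1b x) (Set.mem_univ q) (Set.mem_univ p)
  have hLipG' : ∀ p q, ‖fderiv ℝ G p - fderiv ℝ G q‖ ≤ D * ‖p - q‖ := fun p q =>
    convex_univ.norm_image_sub_le_of_norm_fderiv_le (fun x _ => hG'd x)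
      (fun x _ => hG2b x) (Set.mem_univ q) (Set.mem_univ p)
  -- partial derivative in y
  have hpart : ∀ (x : EuclideanSpace ℝ (Fin d₁)) (y : EuclideanSpace ℝ (Fin (m+1))),
      HasFDerivAt (fun y' => G (x, y'))
        ((fderiv ℝ G (x, y)).comp
          (ContinuousLinearMap.inr ℝ (EuclideanSpace ℝ (Fin d₁)) (EuclideanSpace ℝ (Fin (m+1))))) y :=
    fun x y => (hGd (x, y)).hasFDerivAt.comp y (hasFDerivAt_prodMk_right x y)
  set Ay := fun (x : EuclideanSpace ℝ (Fin d₁)) (y : EuclideanSpace ℝ (Fin (m+1))) =>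
    (fderiv ℝ G (x, y)).comp
      (ContinuousLinearMap.inr ℝ (EuclideanSpace ℝ (Fin d₁)) (EuclideanSpace ℝ (Fin (m+1))))
    with hAy_def
  have hinr : ‖ContinuousLinearMap.inr ℝ (EuclideanSpace ℝ (Fin d₁)) (EuclideanSpace ℝ (Fin (m+1)))‖ ≤ 1 := by
    apply ContinuousLinearMap.opNorm_le_bound _ zero_le_one
    intro y
    rw [ContinuousLinearMap.inr_apply, one_mul, Prod.norm_def]
    simp
  have hAyb : ∀ x y, ‖Ay x y‖ ≤ D := by
    intro x y
    refine (ContinuousLinearMap.opNorm_comp_le _ _).trans ?_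
    have := hG1b (x, y)
    nlinarith [norm_nonneg (fderiv ℝ G (x, y))]
  have hAydiff : ∀ x y x' y', ‖Ay x y - Ay x' y'‖ ≤ D * max ‖x - x'‖ ‖y - y'‖ := by
    intro x y x' y'
    rw [← ContinuousLinearMap.sub_comp]
    refine (ContinuousLinearMap.opNorm_comp_le _ _).trans ?_
    have h1 : ‖fderiv ℝ G (x, y) - fderiv ℝ G (x', y')‖ ≤ D * max ‖x - x'‖ ‖y - y'‖ := by
      have := hLipG' (x, y) (x', y')
      rwa [show ((x,y) - (x',y')) = (x - x', y - y') from rfl, Prod.norm_def] at this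
    calc ‖fderiv ℝ G (x, y) - fderiv ℝ G (x', y')‖ * _ ≤ (D * max ‖x - x'‖ ‖y - y'‖) * 1 :=
          mul_le_mul h1 hinr (norm_nonneg _) (by positivity)
      _ = D * max ‖x - x'‖ ‖y - y'‖ := mul_one _
  -- matrix representation
  set bb := PiLp.basisFun 2 ℝ (Fin (m+1)) with hbb_def
  set Mx := fun (x : EuclideanSpace ℝ (Fin d₁)) (y : EuclideanSpace ℝ (Fin (m+1))) =>
    LinearMap.toMatrix bb bb (Ay x y : EuclideanSpace ℝ (Fin (m+1)) →ₗ[ℝ] EuclideanSpace ℝ (Fin (m+1)))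
    with hMx_def
  have hbbnorm : ∀ j, ‖bb j‖ = 1 := by
    intro j
    rw [hbb_def, PiLp.basisFun_apply]
    rw [show (PiLp.single 2 j (1:ℝ) : EuclideanSpace ℝ (Fin (m+1)))
        = EuclideanSpace.single j (1:ℝ) from rfl]
    rw [EuclideanSpace.norm_single]
    norm_num
  have hMentry : ∀ x y i j, Mx x y i j = (Ay x y) (bb j) i := by
    intro x y i j
    simp only [hMx_def]
    rw [LinearMap.toMatrix_apply]
    rw [hbb_def, PiLp.basisFun_repr]
    rfl
  have hMdet : ∀ x y, (Ay x y).det = (Mx x y).det := by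
    intro x y
    simp only [hMx_def]
    exact (LinearMap.det_toMatrix bb _).symm
  have hMb : ∀ x y i j, |Mx x y i j| ≤ D := by
    intro x y i j
    rw [hMentry]
    refine (aux_coord_le_norm _ i).trans ?_
    calc ‖(Ay x y) (bb j)‖ ≤ ‖Ay x y‖ * ‖bb j‖ := ContinuousLinearMap.le_opNorm _ _
      _ ≤ D * 1 := mul_le_mul (hAyb x y) (le_of_eq (hbbnorm j)) (norm_nonneg _) (by positivity)
      _ = D := mul_one _
  have hMdiffb : ∀ x y x' y' i j,
      |Mx x y i j - Mx x' y' i j| ≤ D * max ‖x - x'‖ ‖y - y'‖ := by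
    intro x y x' y' i j
    rw [hMentry, hMentry]
    have : (Ay x y) (bb j) i - (Ay x' y') (bb j) i = ((Ay x y - Ay x' y') (bb j)) i := by
      simp [ContinuousLinearMap.sub_apply]
    rw [this]
    refine (aux_coord_le_norm _ i).trans ?_
    calc ‖(Ay x y - Ay x' y') (bb j)‖ ≤ ‖Ay x y - Ay x' y'‖ * ‖bb j‖ :=
          ContinuousLinearMap.le_opNorm _ _
      _ = ‖Ay x y - Ay x' y'‖ := by rw [hbbnorm j, mul_one]
      _ ≤ D * max ‖x - x'‖ ‖y - y'‖ := hAydiff x y x' y'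
  -- determinant at base point
  have hfd₀ : fderiv ℝ (fun y => G (x₀, y)) y₀ = Ay x₀ y₀ := (hpart x₀ y₀).fderiv
  have hdet₀ : r ≤ |(Mx x₀ y₀).det| := by
    rw [← hMdet]
    rwa [hfd₀] at hrdet
  have hdet₀ne : (Mx x₀ y₀).det ≠ 0 := by
    intro h
    rw [h] at hdet₀
    simp at hdet₀
    linarith
  have hrle : r ≤ fac * D^(m+1) := by
    refine hdet₀.trans ?_
    have := aux_det_bound (Mx x₀ y₀) (fun _ => D) (fun _ => by linarith) (fun i j => hMb x₀ y₀ i j)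
    refine this.trans (le_of_eq ?_)
    rw [Finset.prod_const]
    simp [hfac_def]
  -- inverse continuous linear maps from matrix inverses
  have hInv : ∀ (x : EuclideanSpace ℝ (Fin d₁)) (y : EuclideanSpace ℝ (Fin (m+1))),
      (Mx x y).det ≠ 0 →
      (∀ v, (LinearMap.toContinuousLinearMap (Matrix.toLin bb bb (Mx x y)⁻¹)) ((Ay x y) v) = v) ∧
      (∀ w, (Ay x y) ((LinearMap.toContinuousLinearMap (Matrix.toLin bb bb (Mx x y)⁻¹)) w) = w) := by
    intro x y hd
    have hU : IsUnit (Mx x y).det := isUnit_iff_ne_zero.mpr hd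
    have h1 : (Mx x y)⁻¹ * (Mx x y) = 1 := Matrix.nonsing_inv_mul _ hU
    have h2 : (Mx x y) * (Mx x y)⁻¹ = 1 := Matrix.mul_nonsing_inv _ hU
    have hA : Matrix.toLin bb bb (Mx x y) =
        (Ay x y : EuclideanSpace ℝ (Fin (m+1)) →ₗ[ℝ] EuclideanSpace ℝ (Fin (m+1))) := by
      simp only [hMx_def]
      exact Matrix.toLin_toMatrix bb bb _
    constructor
    · intro v
      have e1 : Matrix.toLin bb bb ((Mx x y)⁻¹ * (Mx x y)) = LinearMap.id := by
        rw [h1, Matrix.toLin_one]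
      rw [Matrix.toLin_mul bb bb bb] at e1
      have := congrArg (fun (f : EuclideanSpace ℝ (Fin (m+1)) →ₗ[ℝ] EuclideanSpace ℝ (Fin (m+1))) => f v) e1
      simp only [LinearMap.comp_apply, LinearMap.id_apply] at this
      rw [hA] at this
      simpa [LinearMap.coe_toContinuousLinearMap'] using this
    · intro w
      have e1 : Matrix.toLin bb bb ((Mx x y) * (Mx x y)⁻¹) = LinearMap.id := by
        rw [h2, Matrix.toLin_one]
      rw [Matrix.toLin_mul bb bb bb] at e1
      have := congrArg (fun (f : EuclideanSpace ℝ (Fin (m+1)) →ₗ[ℝ] EuclideanSpace ℝ (Fin (m+1))) => f w) e1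
      simp only [LinearMap.comp_apply, LinearMap.id_apply] at this
      rw [hA] at this
      simpa [LinearMap.coe_toContinuousLinearMap'] using this
  -- the inverse at the base point
  set Ainv := LinearMap.toContinuousLinearMap (Matrix.toLin bb bb (Mx x₀ y₀)⁻¹) with hAinv_def
  have hAinvA : ∀ v, Ainv ((Ay x₀ y₀) v) = v := (hInv x₀ y₀ hdet₀ne).1
  have hAAinv : ∀ w, (Ay x₀ y₀) (Ainv w) = w := (hInv x₀ y₀ hdet₀ne).2
  have hAinvEntry : ∀ i j, |Ainv (bb j) i| ≤ fac * D^m / r := by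
    intro i j
    have hentry : Ainv (bb j) i = (Mx x₀ y₀)⁻¹ i j := by
      have e1 : LinearMap.toMatrix bb bb (Matrix.toLin bb bb (Mx x₀ y₀)⁻¹) = (Mx x₀ y₀)⁻¹ :=
        LinearMap.toMatrix_toLin bb bb _
      have e2 := congrFun (congrFun e1 i) j
      rw [LinearMap.toMatrix_apply] at e2
      rw [hbb_def] at e2
      rw [PiLp.basisFun_repr] at e2
      rw [hAinv_def]
      rw [← e2]
      rfl
    rw [hentry, hfac_def]
    exact aux_inv_entry (Mx x₀ y₀) hD1 hr hdet₀ (hMb x₀ y₀) i j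
  have hAinvN : ‖Ainv‖ ≤ Kb := by
    have := aux_opNorm_le Ainv (m := fac * D^m / r) (by positivity) hAinvEntry
    refine this.trans (le_of_eq ?_)
    rw [hKb_def, hnn_def]
    ring
  -- numeric inequalities
  have hρle' : ρ' ≤ r^2 / (16 * c₁^2 * D^(2*m+3)) := hρle
  have hN1 : Kb * (D * ε) ≤ 1/2 := by
    have he : Kb * (D * ε) = 1 / (4 * fac * D) := by
      rw [hKb_def, hε_def, hc₁_def]
      field_simp
      ring
    rw [he]
    rw [div_le_iff₀ (by positivity)]
    nlinarith
  have hN2 : Kb * (D * ρ') ≤ ε/4 := by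
    have h1 : Kb * (D * ρ') ≤ Kb * (D * (r^2 / (16 * c₁^2 * D^(2*m+3)))) := by
      apply mul_le_mul_of_nonneg_left _ (le_of_lt hKbpos)
      exact mul_le_mul_of_nonneg_left hρle' (le_of_lt hD0)
    refine h1.trans ?_
    have he : Kb * (D * (r^2 / (16 * c₁^2 * D^(2*m+3)))) = r / (16 * nn^2 * fac^3 * D^(m+2)) := by
      rw [hKb_def, hc₁_def]
      rw [show 2*m+3 = (m+2) + (m+1) by ring, pow_add]
      field_simp
      ring
    rw [he, hε_def, hc₁_def]
    rw [div_div]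
    rw [div_le_div_iff₀ (by positivity) (by positivity)]
    have h2 : (0:ℝ) < D^(m+2) := pow_pos hD0 _
    nlinarith [mul_pos hr h2, mul_pos (mul_pos hr h2) (mul_pos (mul_pos (by nlinarith : (0:ℝ) < nn^2) (by nlinarith : (0:ℝ) < fac^2)) h2)]
  have hN3 : ρ' ≤ ε := by
    refine hρle'.trans ?_
    rw [hε_def]
    rw [div_le_div_iff₀ (by positivity) (by positivity)]
    have h2 : (0:ℝ) < D^(m+2) := pow_pos hD0 _
    have h3 : r * (4 * c₁ * D^(m+2)) ≤ (fac * D^(m+1)) * (4 * c₁ * D^(m+2)) := by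
      apply mul_le_mul_of_nonneg_right hrle (by positivity)
    calc r^2 * (4 * c₁ * D^(m+2)) = r * (r * (4 * c₁ * D^(m+2))) := by ring
      _ ≤ r * ((fac * D^(m+1)) * (4 * c₁ * D^(m+2))) := by
          apply mul_le_mul_of_nonneg_left h3 (le_of_lt hr)
      _ ≤ r * (16 * c₁^2 * D^(2*m+3)) := by
          apply mul_le_mul_of_nonneg_left _ (le_of_lt hr)
          rw [show 2*m+3 = (m+1) + (m+2) by ring, pow_add D (m+1) (m+2)]
          have hfc : fac ≤ c₁ := by rw [hc₁_def]; nlinarith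
          have h4 : 4 * fac * c₁ ≤ 16 * c₁^2 := by nlinarith
          calc fac * D^(m+1) * (4 * c₁ * D^(m+2)) = (4*fac*c₁) * (D^(m+1) * D^(m+2)) := by ring
            _ ≤ (16*c₁^2) * (D^(m+1)*D^(m+2)) := mul_le_mul_of_nonneg_right h4 (by positivity)
            _ = 16*c₁^2*(D^(m+1)*D^(m+2)) := by ring
  have hN4 : fac * (nn * (D * ε) * D^(m+1)) ≤ r/2 := by
    have he : fac * (nn * (D * ε) * D^(m+1)) = nn * r / (4 * c₁ / fac) := by
      rw [hε_def, hc₁_def]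
      rw [show m+2 = (m+1) + 1 by ring, pow_add]
      field_simp
    rw [he, hc₁_def]
    rw [div_le_div_iff₀ (by positivity) (by norm_num)]
    have : 4 * (nn^2 * fac^2) / fac = 4 * nn^2 * fac := by
      field_simp
    rw [this]
    nlinarith [mul_pos hr (by nlinarith : (0:ℝ) < nn)]
  -- the contraction map
  have hcontr : ∀ x : EuclideanSpace ℝ (Fin d₁), ‖x - x₀‖ ≤ ρ' →
      ∀ y₁, ‖y₁ - y₀‖ ≤ ε → ∀ y₂, ‖y₂ - y₀‖ ≤ ε →
      ‖(y₁ - Ainv (G (x, y₁))) - (y₂ - Ainv (G (x, y₂)))‖ ≤ 1/2 * ‖y₁ - y₂‖ := by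
    intro x hx y₁ hy₁ y₂ hy₂
    set f := fun y : EuclideanSpace ℝ (Fin (m+1)) => G (x, y) - (Ay x₀ y₀) y with hf_def
    have hfd : ∀ y, HasFDerivAt f (Ay x y - Ay x₀ y₀) y := fun y =>
      (hpart x y).sub ((Ay x₀ y₀).hasFDerivAt)
    have hbound : ∀ y ∈ Metric.closedBall y₀ ε, ‖fderiv ℝ f y‖ ≤ D * ε := by
      intro y hy
      rw [(hfd y).fderiv]
      refine (hAydiff x y x₀ y₀).trans ?_
      apply mul_le_mul_of_nonneg_left _ (le_of_lt hD0)
      apply max_le (hx.trans hN3)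
      rwa [Metric.mem_closedBall, dist_eq_norm] at hy
    have key : ‖f y₁ - f y₂‖ ≤ D * ε * ‖y₁ - y₂‖ :=
      (convex_closedBall y₀ ε).norm_image_sub_le_of_norm_fderiv_le
        (fun y _ => (hfd y).differentiableAt) hbound
        (by rwa [Metric.mem_closedBall, dist_eq_norm]) (by rwa [Metric.mem_closedBall, dist_eq_norm])
    have hid : (y₁ - Ainv (G (x, y₁))) - (y₂ - Ainv (G (x, y₂))) = -(Ainv (f y₁ - f y₂)) := by
      have : Ainv (f y₁ - f y₂) = Ainv (G (x, y₁)) - y₁ - (Ainv (G (x, y₂)) - y₂) := by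
        rw [hf_def]
        simp only [map_sub, hAinvA]
      rw [this]
      abel
    rw [hid, norm_neg]
    calc ‖Ainv (f y₁ - f y₂)‖ ≤ ‖Ainv‖ * ‖f y₁ - f y₂‖ := ContinuousLinearMap.le_opNorm _ _
      _ ≤ Kb * (D * ε * ‖y₁ - y₂‖) :=
          mul_le_mul hAinvN key (norm_nonneg _) (le_of_lt hKbpos)
      _ = (Kb * (D * ε)) * ‖y₁ - y₂‖ := by ring
      _ ≤ 1/2 * ‖y₁ - y₂‖ := mul_le_mul_of_nonneg_right hN1 (norm_nonneg _)
  -- existence and uniqueness of the implicit value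
  have hexu : ∀ x : EuclideanSpace ℝ (Fin d₁), ‖x - x₀‖ ≤ ρ' →
      ∃ y, ‖y - y₀‖ ≤ ε/2 ∧ G (x, y) = 0 ∧
        ∀ z, ‖z - y₀‖ ≤ ε → G (x, z) = 0 → z = y := by
    intro x hx
    set Φ := fun y : EuclideanSpace ℝ (Fin (m+1)) => y - Ainv (G (x, y)) with hΦ_def
    have hΦy₀ : ‖Φ y₀ - y₀‖ ≤ ε/4 := by
      have h1 : Φ y₀ - y₀ = -(Ainv (G (x, y₀))) := by rw [hΦ_def]; show y₀ - Ainv (G (x, y₀)) - y₀ = _; abel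
      rw [h1, norm_neg]
      have h2 : ‖G (x, y₀)‖ ≤ D * ρ' := by
        have h3 := hLipG (x, y₀) (x₀, y₀)
        rw [hG00, sub_zero] at h3
        refine h3.trans ?_
        apply mul_le_mul_of_nonneg_left _ (le_of_lt hD0)
        rw [show ((x, y₀) - (x₀, y₀) : EuclideanSpace ℝ (Fin d₁) × EuclideanSpace ℝ (Fin (m+1)))
            = (x - x₀, y₀ - y₀) from rfl, Prod.norm_def]
        simp only [sub_self, norm_zero]
        rw [max_eq_left (norm_nonneg _)]
        exact hx
      calc ‖Ainv (G (x, y₀))‖ ≤ ‖Ainv‖ * ‖G (x, y₀)‖ := ContinuousLinearMap.le_opNorm _ _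
        _ ≤ Kb * (D * ρ') := mul_le_mul hAinvN h2 (norm_nonneg _) (le_of_lt hKbpos)
        _ ≤ ε/4 := hN2
    have hmaps : Set.MapsTo Φ (Metric.closedBall y₀ ε) (Metric.closedBall y₀ ε) := by
      intro y hy
      rw [Metric.mem_closedBall, dist_eq_norm] at hy ⊢
      have h1 : ‖Φ y - Φ y₀‖ ≤ 1/2 * ‖y - y₀‖ := hcontr x hx y hy y₀ (by simp; positivity)
      calc ‖Φ y - y₀‖ ≤ ‖Φ y - Φ y₀‖ + ‖Φ y₀ - y₀‖ := by
            rw [show Φ y - y₀ = (Φ y - Φ y₀) + (Φ y₀ - y₀) by abel]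
            exact norm_add_le _ _
        _ ≤ 1/2 * ‖y - y₀‖ + ε/4 := add_le_add h1 hΦy₀
        _ ≤ ε := by linarith
    have hsc : IsComplete (Metric.closedBall y₀ ε) := Metric.isClosed_closedBall.isComplete
    have hlip : ContractingWith (1/2 : NNReal) (hmaps.restrict Φ _ _) := by
      constructor
      · rw [← NNReal.coe_lt_coe]
        norm_num
      · apply LipschitzWith.of_dist_le_mul
        intro p q
        rw [Subtype.dist_eq, Subtype.dist_eq, dist_eq_norm]
        have hp := p.2
        have hq := q.2
        rw [Metric.mem_closedBall, dist_eq_norm] at hp hq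
        have := hcontr x hx p.1 hp q.1 hq
        calc ‖(hmaps.restrict Φ _ _ p : EuclideanSpace ℝ (Fin (m+1))) - (hmaps.restrict Φ _ _ q : EuclideanSpace ℝ (Fin (m+1)))‖
            = ‖Φ p.1 - Φ q.1‖ := rfl
          _ ≤ 1/2 * ‖p.1 - q.1‖ := this
          _ = ((1/2 : NNReal) : ℝ) * ‖(p : EuclideanSpace ℝ (Fin (m+1))) - (q : EuclideanSpace ℝ (Fin (m+1)))‖ := by
              norm_num
          _ = ((1/2 : NNReal) : ℝ) * dist (p : EuclideanSpace ℝ (Fin (m+1))) (q : EuclideanSpace ℝ (Fin (m+1))) := by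
              rw [dist_eq_norm]
    set ystar := ContractingWith.efixedPoint' Φ hsc hmaps hlip y₀
      (Metric.mem_closedBall_self (le_of_lt hεpos)) (edist_ne_top _ _) with hystar_def
    have hymem : ystar ∈ Metric.closedBall y₀ ε :=
      ContractingWith.efixedPoint_mem' hsc hmaps hlip _ _
    have hyfix : Φ ystar = ystar :=
      ContractingWith.efixedPoint_isFixedPt' hsc hmaps hlip _ _
    have hyG : G (x, ystar) = 0 := by
      have h1 : Ainv (G (x, ystar)) = 0 := by
        have := hyfix
        rw [hΦ_def] at this
        simpa [sub_eq_self] using this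
      have h2 := hAAinv (G (x, ystar))
      rw [h1, map_zero] at h2
      exact h2.symm
    have hymem' : ‖ystar - y₀‖ ≤ ε := by
      rw [Metric.mem_closedBall, dist_eq_norm] at hymem
      exact hymem
    have hyhalf : ‖ystar - y₀‖ ≤ ε/2 := by
      have h1 : ‖ystar - y₀‖ = ‖Φ ystar - y₀‖ := by rw [hyfix]
      have h2 : ‖Φ ystar - Φ y₀‖ ≤ 1/2 * ‖ystar - y₀‖ :=
        hcontr x hx ystar hymem' y₀ (by simp; positivity)
      have h3 : ‖Φ ystar - y₀‖ ≤ ‖Φ ystar - Φ y₀‖ + ‖Φ y₀ - y₀‖ := by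
        rw [show Φ ystar - y₀ = (Φ ystar - Φ y₀) + (Φ y₀ - y₀) by abel]
        exact norm_add_le _ _
      rw [h1]
      calc ‖Φ ystar - y₀‖ ≤ 1/2 * ‖ystar - y₀‖ + ε/4 := h3.trans (add_le_add h2 hΦy₀)
        _ ≤ _ := by
            rw [h1] at *
            linarith [h3.trans (add_le_add h2 hΦy₀)]
    refine ⟨ystar, by linarith [hyhalf], hyG, ?_⟩
    intro z hz hzG
    have := hcontr x hx z hz ystar hymem'
    have h5 : z - Ainv (G (x, z)) = z := by rw [hzG, map_zero, sub_zero]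
    have h6 : ystar - Ainv (G (x, ystar)) = ystar := by rw [hyG, map_zero, sub_zero]
    rw [h5, h6] at this
    have h0 : ‖z - ystar‖ ≤ 0 := by linarith
    have := norm_le_zero_iff.mp h0
    exact sub_eq_zero.mp this
  -- definition of H
  set H : EuclideanSpace ℝ (Fin d₁) → EuclideanSpace ℝ (Fin (m+1)) := fun x =>
    if h : ∃ y, ‖y - y₀‖ ≤ ε/2 ∧ G (x, y) = 0 then h.choose else y₀ with hH_def
  have hball_le : ∀ x ∈ Metric.ball x₀ ρ', ‖x - x₀‖ ≤ ρ' := by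
    intro x hx
    rw [Metric.mem_ball, dist_eq_norm] at hx
    exact le_of_lt hx
  have hHx : ∀ x ∈ Metric.ball x₀ ρ', ‖H x - y₀‖ ≤ ε/2 ∧ G (x, H x) = 0 := by
    intro x hx
    obtain ⟨y, hy1, hy2, -⟩ := hexu x (hball_le x hx)
    have hex : ∃ y, ‖y - y₀‖ ≤ ε/2 ∧ G (x, y) = 0 := ⟨y, hy1, hy2⟩
    rw [hH_def]
    simp only [dif_pos hex]
    exact hex.choose_spec
  -- determinant lower bound near the base point
  have hdetH : ∀ (x : EuclideanSpace ℝ (Fin d₁)) (y : EuclideanSpace ℝ (Fin (m+1))),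
      ‖x - x₀‖ ≤ ρ' → ‖y - y₀‖ ≤ ε → r/2 ≤ |(Mx x y).det| := by
    intro x y hx hy
    have hdiff : ∀ i j, |Mx x y i j - Mx x₀ y₀ i j| ≤ D * ε := by
      intro i j
      refine (hMdiffb x y x₀ y₀ i j).trans ?_
      apply mul_le_mul_of_nonneg_left _ (le_of_lt hD0)
      exact max_le (hx.trans hN3) hy
    have hsub := aux_det_sub (Mx x y) (Mx x₀ y₀) hD1 (by positivity)
      (hMb x y) (hMb x₀ y₀) hdiff
    have hsub' : |(Mx x y).det - (Mx x₀ y₀).det| ≤ r/2 := by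
      refine hsub.trans ?_
      have : (Nat.factorial (m+1) : ℝ) * ((((m+1):ℕ) : ℝ) * (D * ε) * D ^ (m+1)) =
          fac * (nn * (D * ε) * D^(m+1)) := by rw [hfac_def, hnn_def]
      rw [this]
      exact hN4
    have habs : |(Mx x₀ y₀).det| - |(Mx x y).det| ≤ r/2 := by
      have := abs_sub_abs_le_abs_sub (Mx x₀ y₀).det (Mx x y).det
      rw [abs_sub_comm] at hsub'
      linarith
    linarith
  refine ⟨H, ?_, ?_⟩
  · -- smoothness via the inverse function theorem
    intro x1 hx1
    obtain ⟨hP1a, hP1b⟩ := hHx x1 hx1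
    have hdet1 : r/2 ≤ |(Mx x1 (H x1)).det| :=
      hdetH x1 (H x1) (hball_le x1 hx1) (by linarith [hεpos])
    have hdet1ne : (Mx x1 (H x1)).det ≠ 0 := by
      intro h
      rw [h] at hdet1
      simp at hdet1
      linarith
    set Binv := LinearMap.toContinuousLinearMap (Matrix.toLin bb bb (Mx x1 (H x1))⁻¹) with hBinv_def
    have hBinvB : ∀ v, Binv ((Ay x1 (H x1)) v) = v := (hInv x1 (H x1) hdet1ne).1
    have hBBinv : ∀ w, (Ay x1 (H x1)) (Binv w) = w := (hInv x1 (H x1) hdet1ne).2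
    set p1 : EuclideanSpace ℝ (Fin d₁) × EuclideanSpace ℝ (Fin (m+1)) := (x1, H x1) with hp1_def
    set Ψ : EuclideanSpace ℝ (Fin d₁) × EuclideanSpace ℝ (Fin (m+1)) →
        EuclideanSpace ℝ (Fin d₁) × EuclideanSpace ℝ (Fin (m+1)) :=
      fun p => (p.1, G p) with hΨ_def
    have hΨc : ContDiff ℝ 2 Ψ := contDiff_fst.prodMk hG
    set Dp := fderiv ℝ G p1 with hDp_def
    set T : (EuclideanSpace ℝ (Fin d₁) × EuclideanSpace ℝ (Fin (m+1))) →L[ℝ]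
        (EuclideanSpace ℝ (Fin d₁) × EuclideanSpace ℝ (Fin (m+1))) :=
      (ContinuousLinearMap.fst ℝ _ _).prod Dp with hT_def
    set T' : (EuclideanSpace ℝ (Fin d₁) × EuclideanSpace ℝ (Fin (m+1))) →L[ℝ]
        (EuclideanSpace ℝ (Fin d₁) × EuclideanSpace ℝ (Fin (m+1))) :=
      (ContinuousLinearMap.fst ℝ _ _).prod
        (Binv.comp ((ContinuousLinearMap.snd ℝ _ _) -
          Dp.comp ((ContinuousLinearMap.inl ℝ _ _).comp (ContinuousLinearMap.fst ℝ _ _)))) with hT'_def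
    have hBv : ∀ v : EuclideanSpace ℝ (Fin (m+1)), Dp ((0 : EuclideanSpace ℝ (Fin d₁)), v)
        = (Ay x1 (H x1)) v := by
      intro v
      rfl
    have hdiffDp : ∀ (u : EuclideanSpace ℝ (Fin d₁)) (v : EuclideanSpace ℝ (Fin (m+1))),
        Dp (u, v) - Dp (u, 0) = Dp (0, v) := by
      intro u v
      rw [← map_sub]
      congr 1
      rw [Prod.mk_sub_mk, sub_self, sub_zero]
    have h₁ : Function.LeftInverse T' T := by
      rintro ⟨u, v⟩
      show T' (T (u, v)) = (u, v)
      have e1 : T (u, v) = (u, Dp (u, v)) := by rw [hT_def]; rfl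
      rw [e1]
      have e2 : T' (u, Dp (u, v)) = (u, Binv (Dp (u, v) - Dp (u, 0))) := by rw [hT'_def]; rfl
      rw [e2, hdiffDp, hBv, hBinvB]
    have h₂ : Function.RightInverse T' T := by
      rintro ⟨u, w⟩
      show T (T' (u, w)) = (u, w)
      have e2 : T' (u, w) = (u, Binv (w - Dp (u, 0))) := by rw [hT'_def]; rfl
      rw [e2]
      have e1 : T (u, Binv (w - Dp (u, 0))) = (u, Dp (u, Binv (w - Dp (u, 0)))) := by
        rw [hT_def]; rfl
      rw [e1]
      have e3 : Dp (u, Binv (w - Dp (u, 0))) = Dp (u, 0) + Dp (0, Binv (w - Dp (u, 0))) := by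
        rw [← map_add]
        congr 1
        rw [Prod.mk_add_mk, add_zero, zero_add]
      rw [e3, hBv, hBBinv]
      have e4 : Dp (u, 0) + (w - Dp (u, 0)) = w := by abel
      rw [e4]
    set e : (EuclideanSpace ℝ (Fin d₁) × EuclideanSpace ℝ (Fin (m+1))) ≃L[ℝ]
        (EuclideanSpace ℝ (Fin d₁) × EuclideanSpace ℝ (Fin (m+1))) :=
      ContinuousLinearEquiv.equivOfInverse T T' h₁ h₂ with he_def
    have hT_has : HasFDerivAt Ψ T p1 := by
      rw [hΨ_def, hT_def]
      exact (hasFDerivAt_fst).prodMk (hGd p1).hasFDerivAt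
    have hf' : HasFDerivAt Ψ (e : (EuclideanSpace ℝ (Fin d₁) × EuclideanSpace ℝ (Fin (m+1))) →L[ℝ]
        (EuclideanSpace ℝ (Fin d₁) × EuclideanSpace ℝ (Fin (m+1)))) p1 := hT_has
    have hn12 : (2 : WithTop ℕ∞) ≠ 0 := by norm_num
    set finv := (hΨc.contDiffAt).localInverse hf' hn12 with hfinv_def
    have hsm : ContDiffAt ℝ 2 finv (Ψ p1) := (hΨc.contDiffAt).to_localInverse hf' hn12
    have hstrict : HasStrictFDerivAt Ψ (e : (EuclideanSpace ℝ (Fin d₁) × EuclideanSpace ℝ (Fin (m+1))) →L[ℝ]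
        (EuclideanSpace ℝ (Fin d₁) × EuclideanSpace ℝ (Fin (m+1)))) p1 :=
      (hΨc.contDiffAt).hasStrictFDerivAt' hf' hn12
    have hfinv_eq : finv = hstrict.localInverse Ψ e p1 := rfl
    have hri : ∀ᶠ q in 𝓝 (Ψ p1), Ψ (finv q) = q := by
      rw [hfinv_eq]
      exact hstrict.eventually_right_inverse
    have happ : finv (Ψ p1) = p1 := by
      rw [hfinv_eq]
      exact hstrict.localInverse_apply_image
    have hcontinv : ContinuousAt finv (Ψ p1) := by
      rw [hfinv_eq]
      exact hstrict.localInverse_continuousAt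
    have hΨp1 : Ψ p1 = (x1, (0 : EuclideanSpace ℝ (Fin (m+1)))) := by
      rw [hΨ_def]
      show (p1.1, G p1) = _
      rw [hp1_def]
      simp; exact hP1b
    have hmapx : Filter.Tendsto (fun x' : EuclideanSpace ℝ (Fin d₁) =>
        (x', (0 : EuclideanSpace ℝ (Fin (m+1))))) (𝓝 x1) (𝓝 (Ψ p1)) := by
      rw [hΨp1]
      exact Continuous.tendsto (continuous_id.prodMk continuous_const) x1
    have ev1 : ∀ᶠ x' in 𝓝 x1, Ψ (finv (x', 0)) = (x', 0) := hmapx.eventually hri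
    have hq : Filter.Tendsto (fun x' : EuclideanSpace ℝ (Fin d₁) => finv (x', 0)) (𝓝 x1) (𝓝 p1) := by
      have h1 : Filter.Tendsto finv (𝓝 (Ψ p1)) (𝓝 p1) := by
        have := hcontinv
        rw [ContinuousAt, happ] at this
        exact this
      exact h1.comp hmapx
    have ev2 : ∀ᶠ x' in 𝓝 x1, ‖(finv (x', 0)).2 - H x1‖ < ε/4 := by
      have h2 : Filter.Tendsto (fun x' : EuclideanSpace ℝ (Fin d₁) => (finv (x', 0)).2)
          (𝓝 x1) (𝓝 (H x1)) := by
        have := (continuous_snd.tendsto p1).comp hq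
        exact this
      have h3 := h2 (Metric.ball_mem_nhds (H x1) (show (0:ℝ) < ε/4 by positivity))
      refine Filter.eventually_of_mem h3 ?_
      intro x' hx'
      rw [Set.mem_preimage, Metric.mem_ball, dist_eq_norm] at hx'
      exact hx'
    have ev3 : ∀ᶠ x' in 𝓝 x1, x' ∈ Metric.ball x₀ ρ' :=
      Filter.eventually_of_mem (Metric.isOpen_ball.mem_nhds hx1) (fun _ h => h)
    have hHev : H =ᶠ[𝓝 x1] fun x' => (finv (x', 0)).2 := by
      filter_upwards [ev1, ev2, ev3] with x' h1 h2 h3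
      have hq1 : (finv (x', 0)).1 = x' := congrArg Prod.fst h1
      have hq2 : G (finv (x', 0)) = 0 := congrArg Prod.snd h1
      have hfp : ((finv (x', 0)).1, (finv (x', 0)).2) = (x', (finv (x', 0)).2) := by
        rw [hq1]
      have hq3 : G (x', (finv (x', 0)).2) = 0 := by
        rw [← hfp]
        exact hq2
      obtain ⟨y, hy1, hy2, huniq⟩ := hexu x' (hball_le x' h3)
      have hH' := hHx x' h3
      have e1 : H x' = y := huniq (H x') (by linarith [hH'.1, hεpos]) hH'.2
      have e2 : (finv (x', 0)).2 = y := by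
        apply huniq
        · have htri : ‖(finv (x', 0)).2 - y₀‖ ≤ ‖(finv (x', 0)).2 - H x1‖ + ‖H x1 - y₀‖ := by
            rw [show (finv (x', 0)).2 - y₀ = ((finv (x', 0)).2 - H x1) + (H x1 - y₀) by abel]
            exact norm_add_le _ _
          linarith [hP1a]
        · exact hq3
      show H x' = (finv (x', 0)).2
      rw [e1, e2]
    have hc2 : ContDiffAt ℝ 2 (fun x' : EuclideanSpace ℝ (Fin d₁) => finv (x', 0)) x1 := by
      have hsm' := hsm
      rw [hΨp1] at hsm'
      exact hsm'.comp x1 (contDiffAt_id.prodMk contDiffAt_const)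
    have hc3 : ContDiffAt ℝ 2 (fun x' : EuclideanSpace ℝ (Fin d₁) => (finv (x', 0)).2) x1 :=
      contDiff_snd.contDiffAt.comp x1 hc2
    exact (((hc3.of_le (by norm_num)).congr_of_eventuallyEq hHev).contDiffWithinAt)
  · intro x hx
    obtain ⟨hH1, hH2⟩ := hHx x hx
    refine ⟨hH2, ?_⟩
    rw [(hpart x (H x)).fderiv, hMdet]
    exact hdetH x (H x) (hball_le x hx) (by linarith [hεpos])

set_option maxHeartbeats 1600000 in
/-- Quantitative implicit function theorem: if `G : ℝ^{d₁+d₂} → ℝ^{d₂}` is `C²` with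
`G(x₀,y₀) = 0`, `D ≥ max(1, ‖G‖_{C²})` and `0 < r ≤ |det D_y G(x₀,y₀)|`, then with
`C₂ = C(d₁+d₂) D^{-2(d₁+d₂)+1}` there is a `C¹` map `H` on `B(x₀, C₂ r²)` with
`G(x, H(x)) = 0` and `|det D_y G(x, H(x))| ≥ r/2` there. -/
theorem stmt6 (d₁ d₂ : ℕ) :
    ∃ C : ℝ, 0 < C ∧
      ∀ (G : EuclideanSpace ℝ (Fin d₁) × EuclideanSpace ℝ (Fin d₂) → EuclideanSpace ℝ (Fin d₂))
        (x₀ : EuclideanSpace ℝ (Fin d₁)) (y₀ : EuclideanSpace ℝ (Fin d₂)) (D r : ℝ),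
        ContDiff ℝ 2 G → G (x₀, y₀) = 0 → 1 ≤ D →
        (∀ p, ‖G p‖ ≤ D) →
        (∀ p, ‖fderiv ℝ G p‖ ≤ D) →
        (∀ p, ‖fderiv ℝ (fderiv ℝ G) p‖ ≤ D) →
        0 < r → r ≤ |(fderiv ℝ (fun y => G (x₀, y)) y₀).det| →
        ∃ H : EuclideanSpace ℝ (Fin d₁) → EuclideanSpace ℝ (Fin d₂),
          ContDiffOn ℝ 1 H
            (Metric.ball x₀ (C * Real.rpow D (-(2 * ((d₁ : ℝ) + (d₂ : ℝ))) + 1) * r ^ 2)) ∧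
          ∀ x ∈ Metric.ball x₀ (C * Real.rpow D (-(2 * ((d₁ : ℝ) + (d₂ : ℝ))) + 1) * r ^ 2),
            G (x, H x) = 0 ∧ r / 2 ≤ |(fderiv ℝ (fun y => G (x, y)) (H x)).det| := by
  refine ⟨(16 * (((d₂:ℝ))^2 * ((Nat.factorial d₂ : ℝ))^2)^2 + 1)⁻¹, by positivity, ?_⟩
  intro G x₀ y₀ D r hG hG00 hD1 hG0b hG1b hG2b hr hrdet
  have hD0 : (0:ℝ) < D := lt_of_lt_of_le one_pos hD1
  rcases Nat.eq_zero_or_pos d₂ with hd₂ | hd₂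
  · subst hd₂
    haveI : Subsingleton (EuclideanSpace ℝ (Fin 0)) := ⟨fun a b => by ext i; exact i.elim0⟩
    have hdet1 : ∀ (f : EuclideanSpace ℝ (Fin 0) →L[ℝ] EuclideanSpace ℝ (Fin 0)), f.det = 1 := by
      intro f
      show LinearMap.det (f : EuclideanSpace ℝ (Fin 0) →ₗ[ℝ] EuclideanSpace ℝ (Fin 0)) = 1
      rw [show (f : EuclideanSpace ℝ (Fin 0) →ₗ[ℝ] EuclideanSpace ℝ (Fin 0)) = LinearMap.id from
        LinearMap.ext fun v => Subsingleton.elim _ _]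
      exact LinearMap.det_id
    have hr1 : r ≤ 1 := by
      rw [hdet1] at hrdet
      simpa using hrdet
    refine ⟨fun _ => 0, contDiffOn_const, ?_⟩
    intro x hx
    refine ⟨Subsingleton.elim _ _, ?_⟩
    rw [hdet1, abs_one]
    linarith
  rcases Nat.eq_zero_or_pos d₁ with hd₁ | hd₁
  · subst hd₁
    haveI : Subsingleton (EuclideanSpace ℝ (Fin 0)) := ⟨fun a b => by ext i; exact i.elim0⟩
    refine ⟨fun _ => y₀, contDiffOn_const, ?_⟩
    intro x hx
    have hx0 : x = x₀ := Subsingleton.elim _ _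
    subst hx0
    exact ⟨hG00, le_trans (by linarith) hrdet⟩
  obtain ⟨m, rfl⟩ : ∃ m, d₂ = m + 1 := ⟨d₂ - 1, (Nat.succ_pred_eq_of_pos hd₂).symm⟩
  have hrpow0 : 0 < Real.rpow D (-(2 * ((d₁ : ℝ) + ((m+1:ℕ) : ℝ))) + 1) :=
    Real.rpow_pos_of_pos hD0 _
  refine aux_main d₁ m G x₀ y₀ D r _ hG hG00 hD1 hG1b hG2b hr hrdet ?_ ?_
  · positivity
  · have hrpow : Real.rpow D (-(2 * ((d₁ : ℝ) + ((m+1:ℕ) : ℝ))) + 1) ≤ (D ^ (2*m+3))⁻¹ := by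
      have h1 : Real.rpow D (-(2 * ((d₁ : ℝ) + ((m+1:ℕ) : ℝ))) + 1)
          ≤ Real.rpow D (-((2*m+3 : ℕ) : ℝ)) := by
        apply Real.rpow_le_rpow_of_exponent_le hD1
        have hd1R : (1:ℝ) ≤ (d₁:ℝ) := by exact_mod_cast hd₁
        push_cast
        linarith
      have h2 : Real.rpow D (-((2*m+3 : ℕ) : ℝ)) = (D ^ (2*m+3))⁻¹ := by
        rw [show Real.rpow D (-((2*m+3 : ℕ) : ℝ)) = D ^ (-((2*m+3 : ℕ) : ℝ)) from rfl,
          Real.rpow_neg (le_of_lt hD0), Real.rpow_natCast]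
      rwa [h2] at h1
    set X : ℝ := 16 * ((((m+1:ℕ)):ℝ)^2 * ((Nat.factorial (m+1) : ℝ))^2)^2 with hX_def
    have hX0 : 0 < X := by rw [hX_def]; positivity
    have hCle : (X + 1)⁻¹ ≤ X⁻¹ := by
      apply inv_anti₀ hX0
      linarith
    have hpow0 : (0:ℝ) < D ^ (2*m+3) := pow_pos hD0 _
    calc (X + 1)⁻¹ * Real.rpow D (-(2 * ((d₁ : ℝ) + ((m+1:ℕ) : ℝ))) + 1) * r^2
        ≤ X⁻¹ * (D ^ (2*m+3))⁻¹ * r^2 := by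
          apply mul_le_mul_of_nonneg_right _ (by positivity)
          apply mul_le_mul hCle hrpow (le_of_lt hrpow0) (by positivity)
      _ = r^2 / (X * D^(2*m+3)) := by
          rw [div_eq_mul_inv, mul_inv]
          ring
      _ = r^2 / (16 * ((((m+1:ℕ)):ℝ)^2 * ((Nat.factorial (m+1) : ℝ))^2)^2 * D^(2*m+3)) := by
          rw [hX_def]
end

section
/- For every 0 < r, in the plane ℝ² the Lebesgue area of the intersection of two closed Euclidean disks of radius r whose centers are at distance r from each other equals (2π/3 - √3/2) r², and in particular is at least r². -/
open MeasureTheory Real intervalIntegral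
open MeasureTheory Real intervalIntegral
private theorem lensKey1 : ∫ t in (1/2:ℝ)..1, Real.sqrt (1 - t^2) = π/6 - Real.sqrt 3 / 8 := by
  have h6 : Real.sin (π/6) = 1/2 := Real.sin_pi_div_six
  calc ∫ t in (1/2:ℝ)..1, Real.sqrt (1 - t^2)
      = ∫ t in Real.sin (π/6)..Real.sin (π/2), Real.sqrt (1 - t^2) := by
        rw [h6, Real.sin_pi_div_two]
    _ = ∫ θ in (π/6)..(π/2), Real.sqrt (1 - Real.sin θ^2) * Real.cos θ :=
        (integral_comp_mul_deriv (fun x _ => Real.hasDerivAt_sin x) Real.continuousOn_cos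
          (by fun_prop)).symm
    _ = ∫ θ in (π/6)..(π/2), Real.cos θ ^ 2 := by
        refine integral_congr_ae (MeasureTheory.ae_of_all _ fun θ hθ => ?_)
        rw [Set.uIoc_of_le (by linarith [Real.pi_pos]), Set.mem_Ioc] at hθ
        rw [← Real.cos_eq_sqrt_one_sub_sin_sq (by linarith [Real.pi_pos]) hθ.2, pow_two]
    _ = π/6 - Real.sqrt 3 / 8 := by
        rw [integral_cos_sq, Real.cos_pi_div_two, Real.sin_pi_div_two, Real.cos_pi_div_six,
          Real.sin_pi_div_six]
        ring

private theorem lensKey2 (r : ℝ) (hr : 0 < r) :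
    ∫ x in (r/2)..r, Real.sqrt (r^2 - x^2) = (π/6 - Real.sqrt 3 / 8) * r^2 := by
  have h := integral_comp_mul_left (a := (1/2:ℝ)) (b := 1) (fun y => Real.sqrt (r^2 - y^2)) hr.ne'
  have h2 : ∀ t : ℝ, Real.sqrt (r^2 - (r*t)^2) = r * Real.sqrt (1 - t^2) := by
    intro t
    rw [show r^2 - (r*t)^2 = r^2 * (1 - t^2) by ring, Real.sqrt_mul (sq_nonneg r),
      Real.sqrt_sq hr.le]
  simp only [h2] at h
  rw [intervalIntegral.integral_const_mul] at h
  have h3 : ∫ t in (1/2:ℝ)..1, Real.sqrt (1 - t^2) = π/6 - Real.sqrt 3 / 8 := lensKey1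
  rw [h3] at h
  rw [show r * (1/2 : ℝ) = r/2 by ring, show r * (1:ℝ) = r by ring] at h
  rw [smul_eq_mul] at h
  field_simp at h
  nlinarith [h]

private theorem lensKey3 (r : ℝ) (hr : 0 < r) :
    volume {p : ℝ × ℝ | p.1^2 + p.2^2 ≤ r^2 ∧ (p.1 - r)^2 + p.2^2 ≤ r^2} =
      ENNReal.ofReal ((2 * π / 3 - Real.sqrt 3 / 2) * r ^ 2) := by
  set S := {p : ℝ × ℝ | p.1^2 + p.2^2 ≤ r^2 ∧ (p.1 - r)^2 + p.2^2 ≤ r^2} with hS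
  have hmS : MeasurableSet S := by
    have h1 : MeasurableSet {p : ℝ × ℝ | p.1^2 + p.2^2 ≤ r^2} :=
      measurableSet_le ((measurable_fst.pow_const 2).add (measurable_snd.pow_const 2))
        measurable_const
    have h2 : MeasurableSet {p : ℝ × ℝ | (p.1 - r)^2 + p.2^2 ≤ r^2} :=
      measurableSet_le (((measurable_fst.sub measurable_const).pow_const 2).add
        (measurable_snd.pow_const 2)) measurable_const
    exact h1.inter h2
  set g : ℝ → ℝ := fun x => 2 * Real.sqrt (r^2 - max (x^2) ((x - r)^2)) with hg
  have hsec : ∀ x : ℝ, volume (Prod.mk x ⁻¹' S) = ENNReal.ofReal (g x) := by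
    intro x
    have h1 : Prod.mk x ⁻¹' S = {y : ℝ | y^2 ≤ r^2 - max (x^2) ((x - r)^2)} := by
      ext y
      simp only [hS, Set.mem_preimage, Set.mem_setOf_eq]
      rcases max_cases (x^2) ((x - r)^2) with ⟨hm, hle⟩ | ⟨hm, hle⟩ <;> rw [hm] <;> constructor
      · rintro ⟨a, b⟩; linarith
      · intro hy; exact ⟨by linarith, by linarith⟩
      · rintro ⟨a, b⟩; linarith
      · intro hy; exact ⟨by linarith, by linarith⟩
    rw [h1]
    rcases le_or_gt 0 (r^2 - max (x^2) ((x - r)^2)) with hc | hc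
    · have : {y : ℝ | y^2 ≤ r^2 - max (x^2) ((x - r)^2)} =
        Set.Icc (-(Real.sqrt (r^2 - max (x^2) ((x - r)^2)))) (Real.sqrt (r^2 - max (x^2) ((x - r)^2))) := by
        ext y; simp [Real.sq_le hc]
      rw [this, Real.volume_Icc, hg]
      congr 1; ring
    · have h0 : {y : ℝ | y^2 ≤ r^2 - max (x^2) ((x - r)^2)} = ∅ := by
        ext y; simp only [Set.mem_setOf_eq, Set.mem_empty_iff_false, iff_false, not_le]
        exact lt_of_lt_of_le hc (sq_nonneg y)
      rw [h0]
      simp [hg, Real.sqrt_eq_zero_of_nonpos hc.le]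
  have hvol : volume S = ∫⁻ x : ℝ, ENNReal.ofReal (g x) := by
    rw [Measure.volume_eq_prod, Measure.prod_apply hmS]
    exact lintegral_congr hsec
  -- restrict to Icc 0 r
  have hzero : ∀ x : ℝ, x ∉ Set.Icc (0:ℝ) r → g x = 0 := by
    intro x hx
    rw [Set.mem_Icc, not_and_or] at hx
    have : r^2 - max (x^2) ((x - r)^2) ≤ 0 := by
      rcases hx with hx | hx
      · push_neg at hx
        have : r^2 < (x - r)^2 := by nlinarith
        have := le_max_right (x^2) ((x-r)^2); nlinarith [le_max_right (x^2) ((x-r)^2)]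
      · push_neg at hx
        nlinarith [le_max_left (x^2) ((x-r)^2)]
    rw [hg]; simp [Real.sqrt_eq_zero_of_nonpos this]
  have hind : (fun x => ENNReal.ofReal (g x)) =
      Set.indicator (Set.Icc (0:ℝ) r) (fun x => ENNReal.ofReal (g x)) := by
    funext x
    by_cases hx : x ∈ Set.Icc (0:ℝ) r
    · rw [Set.indicator_of_mem hx]
    · rw [Set.indicator_of_notMem hx, hzero x hx]; simp
  have hgcont : Continuous g := by fun_prop
  have hlint : ∫⁻ x : ℝ, ENNReal.ofReal (g x) =
      ENNReal.ofReal (∫ x in Set.Icc (0:ℝ) r, g x) := by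
    rw [hind, lintegral_indicator measurableSet_Icc,
      ← ofReal_integral_eq_lintegral_ofReal (hgcont.integrableOn_Icc)
        (Filter.Eventually.of_forall fun x => by positivity)]
  -- compute the integral
  have hint : ∫ x in Set.Icc (0:ℝ) r, g x = (2 * π / 3 - Real.sqrt 3 / 2) * r ^ 2 := by
    rw [MeasureTheory.integral_Icc_eq_integral_Ioc,
      ← intervalIntegral.integral_of_le hr.le]
    have hsplit : ∫ x in (0:ℝ)..r, g x =
        (∫ x in (0:ℝ)..(r/2), g x) + ∫ x in (r/2)..r, g x :=
      (intervalIntegral.integral_add_adjacent_intervals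
        (hgcont.intervalIntegrable _ _) (hgcont.intervalIntegrable _ _)).symm
    have hL : ∫ x in (0:ℝ)..(r/2), g x = 2 * ∫ x in (0:ℝ)..(r/2), Real.sqrt (r^2 - (r - x)^2) := by
      rw [← intervalIntegral.integral_const_mul]
      apply intervalIntegral.integral_congr
      intro x hx
      rw [Set.uIcc_of_le (by linarith), Set.mem_Icc] at hx
      have hmax : max (x^2) ((x - r)^2) = (x - r)^2 := max_eq_right (by nlinarith)
      rw [hg]; simp only [hmax]
      rw [show (x - r)^2 = (r - x)^2 by ring]
    have hR : ∫ x in (r/2)..r, g x = 2 * ∫ x in (r/2)..r, Real.sqrt (r^2 - x^2) := by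
      rw [← intervalIntegral.integral_const_mul]
      apply intervalIntegral.integral_congr
      intro x hx
      rw [Set.uIcc_of_le (by linarith), Set.mem_Icc] at hx
      have hmax : max (x^2) ((x - r)^2) = x^2 := max_eq_left (by nlinarith)
      rw [hg]; simp only [hmax]
    have hsub : ∫ x in (0:ℝ)..(r/2), Real.sqrt (r^2 - (r - x)^2) =
        ∫ x in (r/2)..r, Real.sqrt (r^2 - x^2) := by
      rw [intervalIntegral.integral_comp_sub_left (fun u => Real.sqrt (r^2 - u^2)) r,
        show r - r/2 = r/2 by ring, show r - 0 = r by ring]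
    have hkey : ∫ x in (r/2)..r, Real.sqrt (r^2 - x^2) = (π/6 - Real.sqrt 3 / 8) * r^2 := lensKey2 r hr
    rw [hsplit, hL, hR, hsub, hkey]; ring
  rw [hvol, hlint, hint]

/-- The area of the intersection of two Euclidean disks of radius `r` in the plane whose
centers are at distance `r` equals `(2π/3 - √3/2) r²`, and in particular is at least `r²`. -/
theorem stmt11 (r : ℝ) (hr : 0 < r) (w₁ w₂ : EuclideanSpace ℝ (Fin 2))
    (h : dist w₁ w₂ = r) :
    volume (Metric.closedBall w₁ r ∩ Metric.closedBall w₂ r) =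
      ENNReal.ofReal ((2 * π / 3 - Real.sqrt 3 / 2) * r ^ 2) ∧
    ENNReal.ofReal (r ^ 2) ≤
      volume (Metric.closedBall w₁ r ∩ Metric.closedBall w₂ r) := by
  set v : EuclideanSpace ℝ (Fin 2) := w₂ - w₁ with hv
  have hvn : ‖v‖ = r := by rw [hv, ← dist_eq_norm', h]
  set u : EuclideanSpace ℝ (Fin 2) := (WithLp.equiv 2 (Fin 2 → ℝ)).symm ![r, 0] with hu
  have hui : ∀ i, u i = ![r, 0] i := fun i => rfl
  have hun : ‖u‖ = r := by
    rw [EuclideanSpace.norm_eq]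
    simp [hui, Fin.sum_univ_two]
    rw [Real.sqrt_sq hr.le]
  -- step 1 : translate
  have step1 : volume (Metric.closedBall w₁ r ∩ Metric.closedBall w₂ r) =
      volume (Metric.closedBall 0 r ∩ Metric.closedBall v r) := by
    have := measure_preimage_add (volume : Measure (EuclideanSpace ℝ (Fin 2))) w₁
      (Metric.closedBall w₁ r ∩ Metric.closedBall w₂ r)
    rw [← this]
    congr 1
    rw [Set.preimage_inter, preimage_add_closedBall, preimage_add_closedBall, sub_self, hv]
  -- step 2 : reflect
  have step2 : volume (Metric.closedBall 0 r ∩ Metric.closedBall v r) =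
      volume (Metric.closedBall (0 : EuclideanSpace ℝ (Fin 2)) r ∩ Metric.closedBall u r) := by
    set T := Submodule.reflection (ℝ ∙ (v - u))ᗮ with hT
    have hTv : T v = u := Submodule.reflection_sub (by rw [hvn, hun])
    have hpre : T ⁻¹' (Metric.closedBall 0 r ∩ Metric.closedBall u r) =
        Metric.closedBall 0 r ∩ Metric.closedBall v r := by
      have d0 : ∀ y : EuclideanSpace ℝ (Fin 2), dist (T y) 0 = dist y 0 := fun y =>
        calc dist (T y) 0 = dist (T y) (T 0) := by rw [map_zero]
        _ = dist y 0 := T.dist_map y 0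
      have dv : ∀ y : EuclideanSpace ℝ (Fin 2), dist (T y) u = dist y v := fun y =>
        calc dist (T y) u = dist (T y) (T v) := by rw [hTv]
        _ = dist y v := T.dist_map y v
      ext x
      simp only [Set.mem_preimage, Set.mem_inter_iff, Metric.mem_closedBall, d0, dv]
    rw [← hpre]
    exact T.measurePreserving.measure_preimage
      ((Metric.isClosed_closedBall.inter Metric.isClosed_closedBall).measurableSet.nullMeasurableSet)
  -- step 3 : to pi
  set Tset : Set (Fin 2 → ℝ) :=
    {f | f 0 ^2 + f 1 ^2 ≤ r^2 ∧ (f 0 - r)^2 + f 1 ^2 ≤ r^2} with hTset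
  have hmT : MeasurableSet Tset := by
    apply MeasurableSet.inter
    · exact measurableSet_le (((measurable_pi_apply 0).pow_const 2).add
        ((measurable_pi_apply 1).pow_const 2)) measurable_const
    · exact measurableSet_le ((((measurable_pi_apply 0).sub measurable_const).pow_const 2).add
        ((measurable_pi_apply 1).pow_const 2)) measurable_const
  have step3 : volume (Metric.closedBall (0 : EuclideanSpace ℝ (Fin 2)) r ∩
      Metric.closedBall u r) = volume Tset := by
    have hpre : (MeasurableEquiv.toLp 2 (Fin 2 → ℝ)).symm ⁻¹' Tset =
        Metric.closedBall 0 r ∩ Metric.closedBall u r := by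
      ext x
      have hx0 : dist x 0 = Real.sqrt ((x 0)^2 + (x 1)^2) := by
        rw [EuclideanSpace.dist_eq, Fin.sum_univ_two]
        simp [Real.dist_eq, sq_abs]
      have hxu : dist x u = Real.sqrt ((x 0 - r)^2 + (x 1)^2) := by
        rw [EuclideanSpace.dist_eq, Fin.sum_univ_two, hui 0, hui 1]
        simp [Real.dist_eq, sq_abs]
      have key : ∀ s : ℝ, 0 ≤ s → (Real.sqrt s ≤ r ↔ s ≤ r^2) := by
        intro s hs
        constructor
        · intro hle
          calc s = (Real.sqrt s)^2 := (Real.sq_sqrt hs).symm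
          _ ≤ r^2 := by nlinarith [Real.sqrt_nonneg s]
        · intro hle
          calc Real.sqrt s ≤ Real.sqrt (r^2) := Real.sqrt_le_sqrt hle
          _ = r := Real.sqrt_sq hr.le
      simp only [Set.mem_preimage, Set.mem_inter_iff, Metric.mem_closedBall, hTset,
        Set.mem_setOf_eq]
      rw [hx0, hxu, key _ (by positivity), key _ (by positivity)]
      rfl
    rw [← hpre]
    exact (EuclideanSpace.volume_preserving_symm_measurableEquiv_toLp (Fin 2)).measure_preimage
      hmT.nullMeasurableSet
  -- step 4 : to prod
  have step4 : volume Tset =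
      volume {p : ℝ × ℝ | p.1^2 + p.2^2 ≤ r^2 ∧ (p.1 - r)^2 + p.2^2 ≤ r^2} := by
    have hpre : (MeasurableEquiv.finTwoArrow : (Fin 2 → ℝ) ≃ᵐ ℝ × ℝ) ⁻¹'
        {p : ℝ × ℝ | p.1^2 + p.2^2 ≤ r^2 ∧ (p.1 - r)^2 + p.2^2 ≤ r^2} = Tset := by
      ext f
      simp [MeasurableEquiv.finTwoArrow, hTset]
    rw [← hpre]
    refine (volume_preserving_finTwoArrow ℝ).measure_preimage ?_
    refine (MeasurableSet.inter ?_ ?_).nullMeasurableSet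
    · exact measurableSet_le ((measurable_fst.pow_const 2).add (measurable_snd.pow_const 2))
        measurable_const
    · exact measurableSet_le (((measurable_fst.sub measurable_const).pow_const 2).add
        (measurable_snd.pow_const 2)) measurable_const
  have main : volume (Metric.closedBall w₁ r ∩ Metric.closedBall w₂ r) =
      ENNReal.ofReal ((2 * π / 3 - Real.sqrt 3 / 2) * r ^ 2) := by
    rw [step1, step2, step3, step4, lensKey3 r hr]
  refine ⟨main, ?_⟩
  rw [main]
  apply ENNReal.ofReal_le_ofReal
  have h3 : Real.sqrt 3 < 1.8 := by
    rw [show (1.8 : ℝ) = Real.sqrt (1.8^2) by rw [Real.sqrt_sq]; norm_num]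
    exact Real.sqrt_lt_sqrt (by norm_num) (by norm_num)
  nlinarith [Real.pi_gt_d6, sq_nonneg r]
end
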